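/- arXiv:1009.4383 — 2 statements merged into one kernel-verified Lean document; each statement's English description precedes it below -/
import Mathlib

section
/- Let G = (V, E) be a finite undirected simple graph and let k be a positive integer with k ≤ |V|. Suppose v_1, …, v_k is a greedy sequence of distinct vertices: writing S_0 = ∅ and S_i = {v_1, …, v_i}, for each i the vertex v_{i+1} maximizes |cov(S_i ∪ {v}) \ cov(S_i)| over all v ∈ V \ S_i. Then for every i with 1 ≤ i ≤ k, the intermediate coverage satisfies |cov(S_i)| ≥ (1 − (1 − 1/k)^i) · max_{T ⊆ V, |T| = k} |cov(T)|. -/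
open Finset

/-- The neighborhood `N(S)` of a set of vertices `S`: all vertices outside `S`
adjacent to some vertex of `S`. -/
def nbhd {V : Type*} [Fintype V] [DecidableEq V] (G : SimpleGraph V) [DecidableRel G.Adj]
    (S : Finset V) : Finset V :=
  Finset.univ.filter fun w => w ∉ S ∧ ∃ v ∈ S, G.Adj v w

/-- The set of nodes covered by `S`: `cov(S) = N(S) ∪ S`. -/
def cov {V : Type*} [Fintype V] [DecidableEq V] (G : SimpleGraph V) [DecidableRel G.Adj]
    (S : Finset V) : Finset V :=
  nbhd G S ∪ S

section Aux
variable {V : Type*} [Fintype V] [DecidableEq V] (G : SimpleGraph V) [DecidableRel G.Adj]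

lemma mem_cov {S : Finset V} {x : V} : x ∈ cov G S ↔ x ∈ S ∨ ∃ v ∈ S, G.Adj v x := by
  simp only [cov, nbhd, mem_union, mem_filter, mem_univ, true_and]
  by_cases h : x ∈ S <;> simp [h]

lemma cov_mono {A B : Finset V} (h : A ⊆ B) : cov G A ⊆ cov G B := by
  intro x hx; rw [mem_cov] at hx ⊢
  rcases hx with h' | ⟨u, hu, hadj⟩
  · exact Or.inl (h h')
  · exact Or.inr ⟨u, h hu, hadj⟩

lemma cov_insert_sdiff (x : V) (S : Finset V) :
    cov G (insert x S) \ cov G S = cov G {x} \ cov G S := by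
  ext y
  simp only [mem_sdiff, mem_cov, mem_insert, mem_singleton]
  constructor
  · rintro ⟨h1, h2⟩
    refine ⟨?_, h2⟩
    rcases h1 with (rfl | hyS) | ⟨u, (rfl | huS), hadj⟩
    · exact Or.inl rfl
    · exact absurd (Or.inl hyS) h2
    · exact Or.inr ⟨u, rfl, hadj⟩
    · exact absurd (Or.inr ⟨u, huS, hadj⟩) h2
  · rintro ⟨h1, h2⟩
    refine ⟨?_, h2⟩
    rcases h1 with rfl | ⟨u, rfl, hadj⟩
    · exact Or.inl (Or.inl rfl)
    · exact Or.inr ⟨u, Or.inl rfl, hadj⟩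

lemma key (S : Finset V) (g : ℕ)
    (hg : ∀ w : V, w ∉ S → (cov G (insert w S) \ cov G S).card ≤ g)
    (T : Finset V) :
    (cov G T).card ≤ (cov G S).card + T.card * g := by
  have hsub : cov G T \ cov G S ⊆ T.biUnion (fun w => cov G {w} \ cov G S) := by
    intro y hy
    rw [mem_sdiff, mem_cov] at hy
    obtain ⟨h1, h2⟩ := hy
    rw [mem_biUnion]
    rcases h1 with h1 | ⟨u, hu, hadj⟩
    · exact ⟨y, h1, by rw [mem_sdiff, mem_cov]; exact ⟨Or.inl (mem_singleton_self y), h2⟩⟩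
    · exact ⟨u, hu, by rw [mem_sdiff, mem_cov]; exact ⟨Or.inr ⟨u, mem_singleton_self u, hadj⟩, h2⟩⟩
  have hterm : ∀ w ∈ T, (cov G {w} \ cov G S).card ≤ g := by
    intro w _
    by_cases hw : w ∈ S
    · have hsub2 : cov G {w} ⊆ cov G S := cov_mono G (by simpa using hw)
      rw [sdiff_eq_empty_iff_subset.mpr hsub2]; simp
    · rw [← cov_insert_sdiff]; exact hg w hw
  calc (cov G T).card ≤ (cov G T \ cov G S).card + (cov G S).card :=
        card_le_card_sdiff_add_card
    _ ≤ (T.biUnion (fun w => cov G {w} \ cov G S)).card + (cov G S).card :=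
        Nat.add_le_add_right (card_le_card hsub) _
    _ ≤ (∑ w ∈ T, (cov G {w} \ cov G S).card) + (cov G S).card := by
        exact Nat.add_le_add_right card_biUnion_le _
    _ ≤ T.card * g + (cov G S).card := by
        exact Nat.add_le_add_right (sum_le_card_nsmul T _ g hterm) _
    _ = (cov G S).card + T.card * g := by ring

end Aux

/-- **Intermediate greedy bound.** For a greedy sequence of distinct vertices, after
`i` steps (`1 ≤ i ≤ k`) the coverage is at least `(1 - (1 - 1/k)^i)` times the optimum
coverage over all `k`-vertex samples. -/
theorem greedy_apx_intermediate {V : Type*} [Fintype V] [DecidableEq V]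
    (G : SimpleGraph V) [DecidableRel G.Adj]
    (k : ℕ) (hk : 1 ≤ k) (hkV : k ≤ Fintype.card V)
    (v : Fin k → V) (hinj : Function.Injective v)
    (S : ℕ → Finset V)
    (hS : ∀ i : ℕ, S i = (Finset.univ.filter fun j : Fin k => (j : ℕ) < i).image v)
    (hgreedy : ∀ i : Fin k, ∀ w : V, w ∉ S i.val →
      (cov G (insert w (S i.val)) \ cov G (S i.val)).card ≤
        (cov G (insert (v i) (S i.val)) \ cov G (S i.val)).card) :
    ∀ i : ℕ, 1 ≤ i → i ≤ k →
      ((cov G (S i)).card : ℝ) ≥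
        (1 - (1 - 1 / (k : ℝ)) ^ i) *
          (((Finset.powersetCard k (Finset.univ : Finset V)).sup
            fun T => (cov G T).card : ℕ) : ℝ) := by
  set OPT : ℕ := (Finset.powersetCard k (Finset.univ : Finset V)).sup
      fun T => (cov G T).card with hOPTdef
  -- step structure
  have hstep : ∀ i : ℕ, ∀ hi : i < k, S (i + 1) = insert (v ⟨i, hi⟩) (S i) := by
    intro i hi
    rw [hS, hS]
    have : (Finset.univ.filter fun j : Fin k => (j : ℕ) < i + 1) =
        insert (⟨i, hi⟩ : Fin k) (Finset.univ.filter fun j : Fin k => (j : ℕ) < i) := by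
      ext j
      simp only [mem_filter, mem_univ, true_and, mem_insert, Fin.ext_iff]
      omega
    rw [this, image_insert]
  have hmono : ∀ i : ℕ, i < k → cov G (S i) ⊆ cov G (S (i + 1)) := by
    intro i hi
    rw [hstep i hi]
    exact cov_mono G (subset_insert _ _)
  have hcard : ∀ i : ℕ, ∀ hi : i < k,
      (cov G (S (i + 1))).card =
        (cov G (S i)).card + (cov G (S (i + 1)) \ cov G (S i)).card := by
    intro i hi
    have := card_sdiff_add_card_eq_card (hmono i hi)
    omega
  have hOPTle : ∀ i : ℕ, ∀ hi : i < k,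
      OPT ≤ (cov G (S i)).card + k * (cov G (S (i + 1)) \ cov G (S i)).card := by
    intro i hi
    apply Finset.sup_le
    intro T hT
    rw [mem_powersetCard] at hT
    have hkey := key G (S i) ((cov G (S (i + 1)) \ cov G (S i)).card) ?_ T
    · rw [hT.2] at hkey; exact hkey
    · intro w hw
      rw [hstep i hi]
      exact hgreedy ⟨i, hi⟩ w hw
  have hk1 : (1 : ℝ) ≤ (k : ℝ) := by exact_mod_cast hk
  have hkpos : (0 : ℝ) < (k : ℝ) := by linarith
  have hfac : (0 : ℝ) ≤ 1 - 1 / (k : ℝ) := by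
    rw [sub_nonneg]
    rw [div_le_one hkpos]
    exact hk1
  have main : ∀ i : ℕ, i ≤ k →
      (OPT : ℝ) - (cov G (S i)).card ≤ (1 - 1 / (k : ℝ)) ^ i * OPT := by
    intro i
    induction i with
    | zero =>
      intro _
      have hS0 : S 0 = ∅ := by
        rw [hS]; simp
      have : cov G (∅ : Finset V) = ∅ := by
        ext x; simp [mem_cov]
      rw [hS0, this]
      simp
    | succ i ih =>
      intro hik
      have hi : i < k := hik
      have ih' := ih (le_of_lt hi)
      have h1 : (OPT : ℝ) ≤ (cov G (S i)).card
          + (k : ℝ) * ((cov G (S (i + 1)) \ cov G (S i)).card : ℝ) := by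
        exact_mod_cast hOPTle i hi
      have h2 : ((cov G (S (i + 1))).card : ℝ) = (cov G (S i)).card
          + ((cov G (S (i + 1)) \ cov G (S i)).card : ℝ) := by
        exact_mod_cast hcard i hi
      set c : ℝ := ((cov G (S i)).card : ℝ)
      set g : ℝ := (((cov G (S (i + 1)) \ cov G (S i)).card : ℕ) : ℝ)
      have hdiv : ((OPT : ℝ) - c) / (k : ℝ) ≤ g := by
        rw [div_le_iff₀ hkpos]
        nlinarith
      have hexp : (1 - 1 / (k : ℝ)) * ((OPT : ℝ) - c)
          = ((OPT : ℝ) - c) - ((OPT : ℝ) - c) / (k : ℝ) := by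
        field_simp
      have step1 : (OPT : ℝ) - (cov G (S (i + 1))).card
          ≤ (1 - 1 / (k : ℝ)) * ((OPT : ℝ) - c) := by
        rw [h2, hexp]; linarith
      calc (OPT : ℝ) - (cov G (S (i + 1))).card
          ≤ (1 - 1 / (k : ℝ)) * ((OPT : ℝ) - c) := step1
        _ ≤ (1 - 1 / (k : ℝ)) * ((1 - 1 / (k : ℝ)) ^ i * OPT) :=
            mul_le_mul_of_nonneg_left ih' hfac
        _ = (1 - 1 / (k : ℝ)) ^ (i + 1) * OPT := by ring
  intro i _ hik
  have h := main i hik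
  have hexp : (1 - (1 - 1 / (k : ℝ)) ^ i) * (OPT : ℝ)
      = (OPT : ℝ) - (1 - 1 / (k : ℝ)) ^ i * OPT := by ring
  rw [ge_iff_le, hexp]
  linarith
end

section
/- Let U be a finite set and C_1, …, C_m ⊆ U (m ≥ 1) with ⋃_{i=1}^m C_i = U, and let G be the graph of the Maximum Coverage reduction built from this instance. Then for every nonempty set S ⊆ I of index vertices with |S| = k, the neighborhood of S in G is exactly N(S) = (I \ S) ∪ ⋃_{i ∈ S} C_i, and hence |N(S)| = (m − k) + |⋃_{i ∈ S} C_i|. (This is the forward direction of the reduction in the proof of Proposition 1: k-element index sets of maximum expansion correspond to k-element subfamilies of maximum union.) -/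
open Finset

/-- The graph of the Maximum Coverage reduction: vertex set `I ⊎ U` with
`I = Fin m` a clique of index vertices, `U` an independent set, and an edge
between index vertex `i` and element `u` exactly when `u ∈ C i`. -/
def redGraph {U : Type*} [DecidableEq U] (m : ℕ) (C : Fin m → Finset U) :
    SimpleGraph (Fin m ⊕ U) where
  Adj x y := match x, y with
    | Sum.inl i, Sum.inl j => i ≠ j
    | Sum.inl i, Sum.inr u => u ∈ C i
    | Sum.inr u, Sum.inl i => u ∈ C i
    | Sum.inr _, Sum.inr _ => False
  symm := by
    constructor
    rintro (i | u) (j | w) h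
    · exact h.symm
    · exact h
    · exact h
    · exact h
  loopless := by
    constructor
    rintro (i | u) h
    · exact h rfl
    · exact h

instance {U : Type*} [DecidableEq U] (m : ℕ) (C : Fin m → Finset U) :
    DecidableRel (redGraph m C).Adj := fun x y =>
  match x, y with
  | Sum.inl i, Sum.inl j => inferInstanceAs (Decidable (i ≠ j))
  | Sum.inl i, Sum.inr u => inferInstanceAs (Decidable (u ∈ C i))
  | Sum.inr u, Sum.inl i => inferInstanceAs (Decidable (u ∈ C i))
  | Sum.inr _, Sum.inr _ => inferInstanceAs (Decidable False)

/-- **Forward direction of the reduction in Proposition 1.** For every nonempty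
`k`-element set `T` of index vertices, the neighborhood of `S = T.image Sum.inl`
in the reduction graph is exactly `(I \ S) ∪ ⋃_{i ∈ T} C_i`, and hence its
cardinality is `(m - k) + |⋃_{i ∈ T} C_i|`. -/
theorem reduction_nbhd_of_index_set {U : Type*} [Fintype U] [DecidableEq U]
    (m k : ℕ) (hm : 1 ≤ m) (C : Fin m → Finset U)
    (hU : ∀ u : U, ∃ i : Fin m, u ∈ C i)
    (T : Finset (Fin m)) (hT : T.Nonempty) (hTcard : T.card = k) :
    nbhd (redGraph m C) (T.image Sum.inl) =
      ((Finset.univ \ T).image Sum.inl) ∪ ((T.biUnion C).image Sum.inr) ∧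
    (nbhd (redGraph m C) (T.image Sum.inl)).card = (m - k) + (T.biUnion C).card := by
  obtain ⟨i0, hi0⟩ := hT
  have heq : nbhd (redGraph m C) (T.image Sum.inl) =
      ((Finset.univ \ T).image Sum.inl) ∪ ((T.biUnion C).image Sum.inr) := by
    ext x
    simp only [nbhd, Finset.mem_filter, Finset.mem_univ, true_and, Finset.mem_union,
      Finset.mem_image, Finset.mem_sdiff, Finset.mem_biUnion]
    cases x with
    | inl j =>
      constructor
      · rintro ⟨hj, v, ⟨a, haT, rfl⟩, hadj⟩
        exact Or.inl ⟨j, fun hjT => hj ⟨j, hjT, rfl⟩, rfl⟩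
      · rintro (⟨a, haT, hae⟩ | ⟨a, -, h⟩)
        · obtain rfl := Sum.inl.inj hae
          exact ⟨fun ⟨b, hbT, hbe⟩ => haT (Sum.inl.inj hbe ▸ hbT),
            Sum.inl i0, ⟨i0, hi0, rfl⟩, fun h => haT (h ▸ hi0)⟩
        · simp at h
    | inr u =>
      constructor
      · rintro ⟨-, v, ⟨a, haT, rfl⟩, hadj⟩
        exact Or.inr ⟨u, ⟨a, haT, hadj⟩, rfl⟩
      · rintro (⟨a, -, h⟩ | ⟨w, ⟨a, haT, hw⟩, he⟩)
        · simp at h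
        · obtain rfl := Sum.inr.inj he
          exact ⟨by simp, Sum.inl a, ⟨a, haT, rfl⟩, hw⟩
  refine ⟨heq, ?_⟩
  rw [heq, Finset.card_union_of_disjoint, Finset.card_image_of_injective _ Sum.inl_injective,
    Finset.card_image_of_injective _ Sum.inr_injective, Finset.card_sdiff_of_subset (Finset.subset_univ T),
    Finset.card_univ, Fintype.card_fin, hTcard]
  simp [Finset.disjoint_left]
end
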